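/- Assume irreflexivity of <_α on worms. For worms A, A₁, …, A_k all with modalities ≥ α, GLP_Λ proves either ⟨α⟩(A ∧ ¬A₁ ∧ ⋯ ∧ ¬A_k) ↔ ⟨α⟩A, or (A ∧ ¬A₁ ∧ ⋯ ∧ ¬A_k) ↔ ⊥. -/

import Mathlib

inductive Formula (L : Type) : Type where
  | bot : Formula L
  | var : Nat → Formula L
  | imp : Formula L → Formula L → Formula L
  | box : L → Formula L → Formula L

namespace Formula

variable {L : Type}

def neg (φ : Formula L) : Formula L := imp φ bot
def top : Formula L := neg bot
def and (φ ψ : Formula L) : Formula L := neg (imp φ ψ.neg)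
def or (φ ψ : Formula L) : Formula L := imp φ.neg ψ
def iff (φ ψ : Formula L) : Formula L := (imp φ ψ).and (imp ψ φ)
def dia (α : L) (φ : Formula L) : Formula L := neg (box α φ.neg)

end Formula

open Formula

/-- Provability in the polymodal provability logic `GLP_Λ` over a linear order. -/
inductive GLP {L : Type} [LinearOrder L] : Formula L → Prop where
  | k1 : ∀ φ ψ : Formula L, GLP (φ.imp (ψ.imp φ))
  | k2 : ∀ φ ψ χ : Formula L, GLP ((φ.imp (ψ.imp χ)).imp ((φ.imp ψ).imp (φ.imp χ)))
  | k3 : ∀ φ ψ : Formula L, GLP ((φ.neg.imp ψ.neg).imp (ψ.imp φ))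
  | dist : ∀ (α : L) (φ ψ : Formula L), GLP ((Formula.box α (φ.imp ψ)).imp ((Formula.box α φ).imp (Formula.box α ψ)))
  | lob : ∀ (α : L) (φ : Formula L), GLP ((Formula.box α ((Formula.box α φ).imp φ)).imp (Formula.box α φ))
  | trans : ∀ (α β : L) (φ : Formula L), α ≤ β → GLP ((Formula.box α φ).imp (Formula.box β (Formula.box α φ)))
  | negintro : ∀ (α β : L) (φ : Formula L), α < β → GLP ((dia α φ).imp (Formula.box β (dia α φ)))
  | mono : ∀ (α β : L) (φ : Formula L), α ≤ β → GLP ((Formula.box α φ).imp (Formula.box β φ))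
  | mp : ∀ φ ψ : Formula L, GLP (φ.imp ψ) → GLP φ → GLP ψ
  | nec : ∀ (α : L) (φ : Formula L), GLP φ → GLP (Formula.box α φ)

/-- The worm (iterated consistency statement) associated to a list of modalities. -/
def worm {L : Type} : List L → Formula L
  | [] => Formula.top
  | α :: w => Formula.dia α (worm w)

/-- `Lt α A B` iff `GLP ⊢ B → ⟨α⟩A`. -/
def Lt {L : Type} [LinearOrder L] (α : L) (A B : List L) : Prop :=
  GLP ((worm B).imp (Formula.dia α (worm A)))

def Le {L : Type} [LinearOrder L] (α : L) (A B : List L) : Prop :=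
  Lt α A B ∨ A = B

def conjNegWorms {L : Type} (l : List (List L)) : Formula L :=
  (l.map (fun b => (worm b).neg)).foldr Formula.and Formula.top

section WormDevelopment

open Formula

variable {L : Type} [LinearOrder L]

/-! ### Hilbert-system basics -/

private theorem glp_imp_refl (φ : Formula L) : GLP (φ.imp φ) :=
  GLP.mp _ _ (GLP.mp _ _ (GLP.k2 φ (φ.imp φ) φ) (GLP.k1 φ (φ.imp φ))) (GLP.k1 φ φ)

/-- Derivations from a list of hypotheses. -/
private inductive Der : List (Formula L) → Formula L → Prop
  | ax {Γ} {φ : Formula L} : φ ∈ Γ → Der Γ φ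
  | thm {Γ} {φ : Formula L} : GLP φ → Der Γ φ
  | mp {Γ} {φ ψ : Formula L} : Der Γ (φ.imp ψ) → Der Γ φ → Der Γ ψ

private theorem Der.deduction {Γ} {φ ψ : Formula L} (h : Der (φ :: Γ) ψ) :
    Der Γ (φ.imp ψ) := by
  generalize hΔ : φ :: Γ = Δ at h
  induction h with
  | ax hmem =>
    subst hΔ
    rcases List.mem_cons.mp hmem with rfl | hmem
    · exact .thm (glp_imp_refl _)
    · exact .mp (.thm (GLP.k1 _ _)) (.ax hmem)
  | thm h => exact .mp (.thm (GLP.k1 _ _)) (.thm h)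
  | mp _ _ ih1 ih2 => exact .mp (.mp (.thm (GLP.k2 _ _ _)) ih1) ih2

private theorem glp_of_der {φ : Formula L} (h : Der [] φ) : GLP φ := by
  generalize hΔ : ([] : List (Formula L)) = Δ at h
  induction h with
  | ax hmem => subst hΔ; simp at hmem
  | thm h => exact h
  | mp _ _ ih1 ih2 => exact GLP.mp _ _ ih1 ih2

private theorem Der.and_intro {Γ} {φ ψ : Formula L} (h1 : Der Γ φ) (h2 : Der Γ ψ) :
    Der Γ (φ.and ψ) := by
  have key : ∀ Δ, Der Δ φ → Der Δ ψ → Der ((φ.imp ψ.neg) :: Δ) Formula.bot := by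
    intro Δ d1 d2
    have w1 : Der ((φ.imp ψ.neg) :: Δ) φ := by
      have : ∀ {χ}, Der Δ χ → Der ((φ.imp ψ.neg) :: Δ) χ := by
        intro χ h
        generalize hΔ : Δ = Δ' at h
        induction h with
        | ax hmem => subst hΔ; exact .ax (List.mem_cons_of_mem _ hmem)
        | thm h => exact .thm h
        | mp _ _ ih1 ih2 => exact .mp ih1 ih2
      exact this d1
    have w2 : Der ((φ.imp ψ.neg) :: Δ) ψ := by
      have : ∀ {χ}, Der Δ χ → Der ((φ.imp ψ.neg) :: Δ) χ := by
        intro χ h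
        generalize hΔ : Δ = Δ' at h
        induction h with
        | ax hmem => subst hΔ; exact .ax (List.mem_cons_of_mem _ hmem)
        | thm h => exact .thm h
        | mp _ _ ih1 ih2 => exact .mp ih1 ih2
      exact this d2
    exact .mp (.mp (.ax (List.Mem.head _)) w1) w2
  exact (key Γ h1 h2).deduction

private theorem glp_explosion (φ : Formula L) : GLP (Formula.bot.imp φ) :=
  GLP.mp _ _ (GLP.k3 φ Formula.bot)
    (GLP.mp _ _ (GLP.k1 _ _) (glp_imp_refl Formula.bot))

private theorem glp_dni (φ : Formula L) : GLP (φ.imp φ.neg.neg) :=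
  glp_of_der (Der.deduction (Der.deduction
    (.mp (.ax (List.Mem.head _)) (.ax (List.Mem.tail _ (List.Mem.head _))))))

private theorem glp_dne (φ : Formula L) : GLP (φ.neg.neg.imp φ) :=
  GLP.mp _ _ (GLP.k3 φ φ.neg.neg) (glp_dni φ.neg)

private theorem glp_comp {φ ψ χ : Formula L} (h1 : GLP (φ.imp ψ)) (h2 : GLP (ψ.imp χ)) :
    GLP (φ.imp χ) :=
  glp_of_der (Der.deduction (.mp (.thm h2) (.mp (.thm h1) (.ax (List.Mem.head _)))))

private theorem glp_and_left (φ ψ : Formula L) : GLP ((φ.and ψ).imp φ) := by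
  have d : Der [φ.and ψ] φ := by
    have dnn : Der [φ.neg, φ.and ψ] Formula.bot := by
      have dimp : Der [φ.neg, φ.and ψ] (φ.imp ψ.neg) :=
        Der.deduction (.mp (.thm (glp_explosion ψ.neg))
          (.mp (.ax (List.Mem.tail _ (List.Mem.head _))) (.ax (List.Mem.head _))))
      exact .mp (.ax (List.Mem.tail _ (List.Mem.head _))) dimp
    exact .mp (.thm (glp_dne φ)) dnn.deduction
  exact glp_of_der d.deduction

private theorem glp_and_right (φ ψ : Formula L) : GLP ((φ.and ψ).imp ψ) := by
  have d : Der [φ.and ψ] ψ := by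
    have dnn : Der [ψ.neg, φ.and ψ] Formula.bot :=
      .mp (.ax (List.Mem.tail _ (List.Mem.head _)))
        (.mp (.thm (GLP.k1 ψ.neg φ)) (.ax (List.Mem.head _)))
    exact .mp (.thm (glp_dne ψ)) dnn.deduction
  exact glp_of_der d.deduction

private theorem glp_pair {χ φ ψ : Formula L} (h1 : GLP (χ.imp φ)) (h2 : GLP (χ.imp ψ)) :
    GLP (χ.imp (φ.and ψ)) :=
  glp_of_der (Der.deduction (Der.and_intro
    (.mp (.thm h1) (.ax (List.Mem.head _))) (.mp (.thm h2) (.ax (List.Mem.head _)))))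

private theorem glp_imp_top (φ : Formula L) : GLP (φ.imp Formula.top) :=
  GLP.mp _ _ (GLP.k1 _ _) (glp_imp_refl Formula.bot)

private theorem glp_contra {φ ψ : Formula L} (h : GLP (φ.imp ψ)) :
    GLP (ψ.neg.imp φ.neg) :=
  glp_of_der (Der.deduction (Der.deduction
    (.mp (.ax (List.Mem.tail _ (List.Mem.head _)))
      (.mp (.thm h) (.ax (List.Mem.head _))))))

private theorem glp_nand (φ χ : Formula L) :
    GLP (((φ.and χ).neg).imp (χ.imp φ.neg)) := by
  have d : Der [φ, χ, (φ.and χ).neg] Formula.bot :=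
    .mp (.ax (List.Mem.tail _ (List.Mem.tail _ (List.Mem.head _))))
      (Der.and_intro (.ax (List.Mem.head _)) (.ax (List.Mem.tail _ (List.Mem.head _))))
  exact glp_of_der d.deduction.deduction.deduction



/-! ### Modal toolkit -/

private theorem box_mono {β : L} {φ ψ : Formula L} (h : GLP (φ.imp ψ)) :
    GLP ((Formula.box β φ).imp (Formula.box β ψ)) :=
  GLP.mp _ _ (GLP.dist β φ ψ) (GLP.nec β _ h)

private theorem dia_mono {β : L} {φ ψ : Formula L} (h : GLP (φ.imp ψ)) :
    GLP ((dia β φ).imp (dia β ψ)) :=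
  glp_contra (box_mono (glp_contra h))

private theorem dia_lvl {l β : L} (h : l ≤ β) (φ : Formula L) :
    GLP ((dia β φ).imp (dia l φ)) :=
  glp_contra (GLP.mono l β φ.neg h)

private theorem dia_absorb {l β : L} (h : l ≤ β) (φ : Formula L) :
    GLP ((dia β (dia l φ)).imp (dia l φ)) :=
  glp_contra (glp_comp (GLP.trans l β φ.neg h) (box_mono (glp_dni _)))

private theorem box_dia_K (β : L) (φ χ : Formula L) :
    GLP (((Formula.box β χ).and (dia β φ)).imp (dia β (φ.and χ))) := by
  have taut : GLP (((φ.and χ).neg).imp (χ.imp φ.neg)) := glp_nand φ χ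
  have d : Der [Formula.box β ((φ.and χ).neg), (Formula.box β χ).and (dia β φ)]
      Formula.bot := by
    have hb : Der [Formula.box β ((φ.and χ).neg), (Formula.box β χ).and (dia β φ)]
        (Formula.box β χ) :=
      .mp (.thm (glp_and_left _ _)) (.ax (List.Mem.tail _ (List.Mem.head _)))
    have hd : Der [Formula.box β ((φ.and χ).neg), (Formula.box β χ).and (dia β φ)]
        (dia β φ) :=
      .mp (.thm (glp_and_right _ _)) (.ax (List.Mem.tail _ (List.Mem.head _)))
    have step : Der [Formula.box β ((φ.and χ).neg), (Formula.box β χ).and (dia β φ)]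
        (Formula.box β φ.neg) :=
      .mp (.mp (.thm (GLP.dist β χ φ.neg))
        (.mp (.thm (box_mono taut)) (.ax (List.Mem.head _)))) hb
    exact .mp hd step
  exact glp_of_der d.deduction.deduction

private theorem glp_L1 {l β : L} (hlt : l < β) (φ ψ : Formula L) :
    GLP (((dia β φ).and (dia l ψ)).imp (dia β (φ.and (dia l ψ)))) := by
  have d : Der [(dia β φ).and (dia l ψ)] (dia β (φ.and (dia l ψ))) := by
    have ha : Der [(dia β φ).and (dia l ψ)] (dia β φ) :=
      .mp (.thm (glp_and_left _ _)) (.ax (List.Mem.head _))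
    have hd : Der [(dia β φ).and (dia l ψ)] (dia l ψ) :=
      .mp (.thm (glp_and_right _ _)) (.ax (List.Mem.head _))
    have hb : Der [(dia β φ).and (dia l ψ)] (Formula.box β (dia l ψ)) :=
      .mp (.thm (GLP.negintro l β ψ hlt)) hd
    exact .mp (.thm (box_dia_K β φ (dia l ψ))) (Der.and_intro hb ha)
  exact glp_of_der d.deduction

private theorem lob_dia (β : L) (φ : Formula L) :
    GLP ((dia β φ).imp (dia β (φ.and (Formula.box β φ.neg)))) :=
  glp_contra (glp_comp (box_mono (glp_nand φ (Formula.box β φ.neg))) (GLP.lob β φ.neg))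

/-! ### Worm lemmas -/

private def lbW (l : L) (A : List L) : Prop := ∀ b ∈ A, l ≤ b
private def lbsW (m : L) (A : List L) : Prop := ∀ b ∈ A, m < b

private theorem worm_append_imp (C D' : List L) :
    GLP ((worm (C ++ D')).imp (worm C)) := by
  induction C with
  | nil => exact glp_imp_top _
  | cons c C' ih => exact dia_mono ih

private theorem split₁ {m : L} {C : List L} (h : lbW m C) (D : List L) :
    GLP ((worm (C ++ m :: D)).imp (dia m (worm D))) := by
  induction C with
  | nil => exact glp_imp_refl _
  | cons c C' ih =>
    exact glp_comp (dia_mono (ih (fun b hb => h b (List.mem_cons_of_mem _ hb))))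
      (dia_absorb (h c (List.Mem.head _)) _)

private theorem split₂ {m : L} {C : List L} (h : lbsW m C) (D : List L) :
    GLP (((worm C).and (dia m (worm D))).imp (worm (C ++ m :: D))) := by
  induction C with
  | nil => exact glp_and_right _ _
  | cons c C' ih =>
    exact glp_comp (glp_L1 (h c (List.Mem.head _)) _ _)
      (dia_mono (ih (fun b hb => h b (List.mem_cons_of_mem _ hb))))

private theorem dia_top_of_cons {l b : L} (h : l ≤ b) (B₁ : List L) :
    GLP ((worm (b :: B₁)).imp (dia l Formula.top)) :=
  glp_comp (dia_lvl h _) (dia_mono (glp_imp_top _))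

/-! ### List helpers -/

private theorem exists_min : ∀ (l : List L), l ≠ [] → ∃ m, m ∈ l ∧ ∀ x ∈ l, m ≤ x := by
  intro l
  induction l with
  | nil => intro h; exact absurd rfl h
  | cons a t ih =>
    intro _
    rcases eq_or_ne t [] with rfl | ht
    · exact ⟨a, List.Mem.head _, by intro x hx; simp at hx; simp [hx]⟩
    · obtain ⟨m, hm, hmin⟩ := ih ht
      rcases le_total a m with hle | hle
      · refine ⟨a, List.Mem.head _, ?_⟩
        intro x hx
        rcases List.mem_cons.mp hx with rfl | hx
        · exact le_refl _
        · exact le_trans hle (hmin x hx)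
      · refine ⟨m, List.mem_cons_of_mem _ hm, ?_⟩
        intro x hx
        rcases List.mem_cons.mp hx with rfl | hx
        · exact hle
        · exact hmin x hx

private theorem decomp_first {m : L} : ∀ {A : List L}, m ∈ A → lbW m A →
    ∃ C D, A = C ++ m :: D ∧ lbsW m C := by
  intro A
  induction A with
  | nil => intro h; simp at h
  | cons a t ih =>
    intro hmem hlb
    rcases eq_or_ne a m with rfl | hne
    · exact ⟨[], t, rfl, fun b hb => by simp at hb⟩
    · have hmt : m ∈ t := by
        rcases List.mem_cons.mp hmem with h | h
        · exact absurd h.symm hne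
        · exact h
      obtain ⟨C, D, hCD, hC⟩ := ih hmt (fun b hb => hlb b (List.mem_cons_of_mem _ hb))
      refine ⟨a :: C, D, by rw [hCD]; rfl, ?_⟩
      intro b hb
      rcases List.mem_cons.mp hb with rfl | hb
      · exact lt_of_le_of_ne (hlb b (List.Mem.head _)) (Ne.symm hne)
      · exact hC b hb

/-! ### The trichotomy (linearity of worms) -/

private def AbvW (A B : List L) : Prop :=
  ∀ l, lbW l A → lbW l B → GLP ((worm A).imp (dia l (worm B)))

private def EqW (A B : List L) : Prop :=
  GLP ((worm A).imp (worm B)) ∧ GLP ((worm B).imp (worm A))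

private def TriS (A B : List L) : Prop := AbvW A B ∨ AbvW B A ∨ EqW A B

private theorem TriS.symm {A B : List L} (h : TriS A B) : TriS B A := by
  rcases h with h | h | h
  · exact Or.inr (Or.inl h)
  · exact Or.inl h
  · exact Or.inr (Or.inr ⟨h.2, h.1⟩)

private theorem ab_of_at {A B : List L} {m : L} (hm : m ∈ A ∨ m ∈ B)
    (h : GLP ((worm A).imp (dia m (worm B)))) : AbvW A B :=
  fun l hA hB =>
    glp_comp h (dia_lvl (hm.elim (fun h' => hA m h') (fun h' => hB m h')) _)

private theorem glp_L1c {m ν : L} (hlt : m < ν) {χ φ ψ : Formula L}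
    (h1 : GLP (χ.imp (dia ν φ))) (h2 : GLP (χ.imp (dia m ψ))) :
    GLP (χ.imp (dia ν (φ.and (dia m ψ)))) :=
  glp_comp (glp_pair h1 h2) (glp_L1 hlt _ _)

private theorem tri_caseA {n : ℕ}
    (ih : ∀ X Y : List L, X.length + Y.length ≤ n → TriS X Y)
    {A B C D : List L} {m : L} (hA : A = C ++ m :: D) (hC : lbsW m C)
    (hBne : B ≠ []) (hBs : lbsW m B) (hlbA : lbW m A)
    (hlen : A.length + B.length ≤ n + 1) : TriS A B := by
  have hmA : m ∈ A := by rw [hA]; exact List.mem_append.mpr (Or.inr (List.Mem.head _))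
  have hlbC : lbW m C := fun b hb => le_of_lt (hC b hb)
  have hlbD : lbW m D := fun b hb => by
    refine hlbA b ?_
    rw [hA]; exact List.mem_append.mpr (Or.inr (List.mem_cons_of_mem _ hb))
  have hlbB : lbW m B := fun b hb => le_of_lt (hBs b hb)
  have hALen : A.length = C.length + D.length + 1 := by
    have := congrArg List.length hA
    simp [List.length_append] at this; omega
  have hBpos : 0 < B.length := List.length_pos_iff.mpr hBne
  have lenCB : C.length + B.length ≤ n := by omega
  have lenDB : D.length + B.length ≤ n := by omega
  have lenCD : C.length + D.length ≤ n := by omega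
  obtain ⟨ν, hνmem, hνmin⟩ := exists_min (C ++ B)
    (by intro h; exact hBne (List.append_eq_nil_iff.mp h).2)
  have hmν : m < ν := by
    rcases List.mem_append.mp hνmem with h | h
    · exact hC ν h
    · exact hBs ν h
  have hνC : lbW ν C := fun b hb => hνmin b (List.mem_append.mpr (Or.inl hb))
  have hνB : lbW ν B := fun b hb => hνmin b (List.mem_append.mpr (Or.inr hb))
  have hAC : GLP ((worm A).imp (worm C)) := by rw [hA]; exact worm_append_imp C (m :: D)
  have hAD : GLP ((worm A).imp (dia m (worm D))) := by rw [hA]; exact split₁ hlbC D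
  have hspA : GLP (((worm C).and (dia m (worm D))).imp (worm A)) := by
    rw [hA]; exact split₂ hC D
  rcases ih C B lenCB with hCB | hBC | hEq
  · -- C strictly above B
    exact Or.inl (ab_of_at (Or.inl hmA)
      (glp_comp hAC (glp_comp (hCB ν hνC hνB) (dia_lvl (le_of_lt hmν) _))))
  · -- B strictly above C
    rcases ih D B lenDB with hDB | hBD | hEq2
    · exact Or.inl (ab_of_at (Or.inl hmA)
        (glp_comp hAD (glp_comp (dia_mono (hDB m hlbD hlbB)) (dia_absorb (le_refl m) _))))
    · have h1 : GLP ((worm B).imp (dia ν (worm C))) := hBC ν hνB hνC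
      have h2 : GLP ((worm B).imp (dia m (worm D))) := hBD m hlbB hlbD
      have h3 : GLP ((worm B).imp (dia ν (worm A))) :=
        glp_comp (glp_L1c hmν h1 h2) (dia_mono hspA)
      exact Or.inr (Or.inl (ab_of_at (Or.inr hmA)
        (glp_comp h3 (dia_lvl (le_of_lt hmν) _))))
    · exact Or.inl (ab_of_at (Or.inl hmA) (glp_comp hAD (dia_mono hEq2.1)))
  · -- B ≡ C
    rcases ih C D lenCD with hCD | hDC | hEq3
    · refine Or.inr (Or.inr ⟨glp_comp hAC hEq.1, ?_⟩)
      exact glp_comp (glp_pair hEq.2 (glp_comp hEq.2 (hCD m hlbC hlbD))) hspA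
    · exact Or.inl (ab_of_at (Or.inl hmA)
        (glp_comp hAD (glp_comp (dia_mono (hDC m hlbD hlbC))
          (glp_comp (dia_absorb (le_refl m) _) (dia_mono hEq.1)))))
    · exact Or.inl (ab_of_at (Or.inl hmA)
        (glp_comp hAD (dia_mono (glp_comp hEq3.2 hEq.1))))

private theorem tri_both_aux {n : ℕ}
    (ih : ∀ X Y : List L, X.length + Y.length ≤ n → TriS X Y)
    {A B C D E F : List L} {m : L}
    (hA : A = C ++ m :: D) (hB : B = E ++ m :: F)
    (hC : lbsW m C) (hE : lbsW m E)
    (hlbA : lbW m A) (hlbB : lbW m B)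
    (hFD : AbvW F D)
    (hlen : A.length + B.length ≤ n + 1) : TriS A B := by
  have hmA : m ∈ A := by rw [hA]; exact List.mem_append.mpr (Or.inr (List.Mem.head _))
  have hmB : m ∈ B := by rw [hB]; exact List.mem_append.mpr (Or.inr (List.Mem.head _))
  have hlbC : lbW m C := fun b hb => le_of_lt (hC b hb)
  have hlbE : lbW m E := fun b hb => le_of_lt (hE b hb)
  have hlbD : lbW m D := fun b hb => by
    refine hlbA b ?_; rw [hA]; exact List.mem_append.mpr (Or.inr (List.mem_cons_of_mem _ hb))
  have hlbF : lbW m F := fun b hb => by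
    refine hlbB b ?_; rw [hB]; exact List.mem_append.mpr (Or.inr (List.mem_cons_of_mem _ hb))
  have hALen : A.length = C.length + D.length + 1 := by
    have := congrArg List.length hA; simp [List.length_append] at this; omega
  have hBLen : B.length = E.length + F.length + 1 := by
    have := congrArg List.length hB; simp [List.length_append] at this; omega
  have lenAF : A.length + F.length ≤ n := by omega
  have lenCE : C.length + E.length ≤ n := by omega
  have hAC : GLP ((worm A).imp (worm C)) := by rw [hA]; exact worm_append_imp C (m :: D)
  have hBE : GLP ((worm B).imp (worm E)) := by rw [hB]; exact worm_append_imp E (m :: F)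
  have hAD : GLP ((worm A).imp (dia m (worm D))) := by rw [hA]; exact split₁ hlbC D
  have hBF : GLP ((worm B).imp (dia m (worm F))) := by rw [hB]; exact split₁ hlbE F
  have hspA : GLP (((worm C).and (dia m (worm D))).imp (worm A)) := by
    rw [hA]; exact split₂ hC D
  have hspB : GLP (((worm E).and (dia m (worm F))).imp (worm B)) := by
    rw [hB]; exact split₂ hE F
  have hFDm : GLP ((worm F).imp (dia m (worm D))) := hFD m hlbF hlbD
  have hdFD : GLP ((dia m (worm F)).imp (dia m (worm D))) :=
    glp_comp (dia_mono hFDm) (dia_absorb (le_refl m) _)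
  by_cases hCnil : C = []
  · -- A = ⟨m⟩D ; always B strictly above A
    have hFA : GLP ((worm F).imp (worm A)) := by rw [hA, hCnil]; exact hFDm
    exact Or.inr (Or.inl (ab_of_at (Or.inr hmA) (glp_comp hBF (dia_mono hFA))))
  · obtain ⟨c, C₁, hCval⟩ := List.exists_cons_of_ne_nil hCnil
    by_cases hEnil : E = []
    · rcases ih A F lenAF with hAF | hFA | hEqAF
      · -- A strictly above F : A strictly above B
        refine Or.inl (fun l hlA hlB => ?_)
        have hlm : l ≤ m := hlA m hmA
        have hstep1 : GLP ((worm A).imp (worm (C ++ m :: F))) :=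
          glp_comp (glp_pair hAC (hAF m hlbA hlbF)) (split₂ hC F)
        have hlc : l ≤ c := le_trans hlm (le_of_lt (hC c (by rw [hCval]; exact List.Mem.head _)))
        have hstep2 : GLP ((worm (C ++ m :: F)).imp (dia l (worm B))) := by
          rw [hCval, hB, hEnil]
          exact glp_comp (dia_lvl hlc _)
            (dia_mono (split₁ (fun b hb => hlbC b (by rw [hCval]; exact List.mem_cons_of_mem _ hb)) F))
        exact glp_comp hstep1 hstep2
      · exact Or.inr (Or.inl (ab_of_at (Or.inr hmA) (glp_comp hBF
          (glp_comp (dia_mono (hFA m hlbF hlbA)) (dia_absorb (le_refl m) _)))))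
      · exact Or.inr (Or.inl (ab_of_at (Or.inr hmA) (glp_comp hBF (dia_mono hEqAF.2))))
    · obtain ⟨ν, hνmem, hνmin⟩ := exists_min (C ++ E)
        (by intro h; exact hCnil (List.append_eq_nil_iff.mp h).1)
      have hmν : m < ν := by
        rcases List.mem_append.mp hνmem with h | h
        · exact hC ν h
        · exact hE ν h
      have hνC : lbW ν C := fun b hb => hνmin b (List.mem_append.mpr (Or.inl hb))
      have hνE : lbW ν E := fun b hb => hνmin b (List.mem_append.mpr (Or.inr hb))
      rcases ih C E lenCE with hCE | hEC | hEqCE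
      · -- C strictly above E
        rcases ih A F lenAF with hAF | hFA | hEqAF
        · have h1 : GLP ((worm A).imp (dia ν (worm E))) := glp_comp hAC (hCE ν hνC hνE)
          have h2 : GLP ((worm A).imp (dia m (worm F))) := hAF m hlbA hlbF
          have h3 : GLP ((worm A).imp (dia ν (worm B))) :=
            glp_comp (glp_L1c hmν h1 h2) (dia_mono hspB)
          exact Or.inl (ab_of_at (Or.inl hmA) (glp_comp h3 (dia_lvl (le_of_lt hmν) _)))
        · exact Or.inr (Or.inl (ab_of_at (Or.inr hmA) (glp_comp hBF
            (glp_comp (dia_mono (hFA m hlbF hlbA)) (dia_absorb (le_refl m) _)))))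
        · exact Or.inr (Or.inl (ab_of_at (Or.inr hmA) (glp_comp hBF (dia_mono hEqAF.2))))
      · -- E strictly above C : B strictly above A
        have h1 : GLP ((worm B).imp (dia ν (worm C))) := glp_comp hBE (hEC ν hνE hνC)
        have h2 : GLP ((worm B).imp (dia m (worm D))) := glp_comp hBF hdFD
        have h3 : GLP ((worm B).imp (dia ν (worm A))) :=
          glp_comp (glp_L1c hmν h1 h2) (dia_mono hspA)
        exact Or.inr (Or.inl (ab_of_at (Or.inr hmA) (glp_comp h3 (dia_lvl (le_of_lt hmν) _))))
      · -- C ≡ E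
        rcases ih A F lenAF with hAF | hFA | hEqAF
        · refine Or.inr (Or.inr ⟨?_, ?_⟩)
          · exact glp_comp (glp_pair (glp_comp hAC hEqCE.1) (hAF m hlbA hlbF)) hspB
          · exact glp_comp (glp_pair (glp_comp hBE hEqCE.2) (glp_comp hBF hdFD)) hspA
        · exact Or.inr (Or.inl (ab_of_at (Or.inr hmA) (glp_comp hBF
            (glp_comp (dia_mono (hFA m hlbF hlbA)) (dia_absorb (le_refl m) _)))))
        · exact Or.inr (Or.inl (ab_of_at (Or.inr hmA) (glp_comp hBF (dia_mono hEqAF.2))))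

private theorem tri_both_eq {n : ℕ}
    (ih : ∀ X Y : List L, X.length + Y.length ≤ n → TriS X Y)
    {A B C D E F : List L} {m : L}
    (hA : A = C ++ m :: D) (hB : B = E ++ m :: F)
    (hC : lbsW m C) (hE : lbsW m E)
    (hlbA : lbW m A) (hlbB : lbW m B)
    (hDF : EqW D F)
    (hlen : A.length + B.length ≤ n + 1) : TriS A B := by
  have hmA : m ∈ A := by rw [hA]; exact List.mem_append.mpr (Or.inr (List.Mem.head _))
  have hmB : m ∈ B := by rw [hB]; exact List.mem_append.mpr (Or.inr (List.Mem.head _))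
  have hlbC : lbW m C := fun b hb => le_of_lt (hC b hb)
  have hlbE : lbW m E := fun b hb => le_of_lt (hE b hb)
  have hALen : A.length = C.length + D.length + 1 := by
    have := congrArg List.length hA; simp [List.length_append] at this; omega
  have hBLen : B.length = E.length + F.length + 1 := by
    have := congrArg List.length hB; simp [List.length_append] at this; omega
  have lenCE : C.length + E.length ≤ n := by omega
  have hAC : GLP ((worm A).imp (worm C)) := by rw [hA]; exact worm_append_imp C (m :: D)
  have hBE : GLP ((worm B).imp (worm E)) := by rw [hB]; exact worm_append_imp E (m :: F)
  have hAD : GLP ((worm A).imp (dia m (worm D))) := by rw [hA]; exact split₁ hlbC D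
  have hBF : GLP ((worm B).imp (dia m (worm F))) := by rw [hB]; exact split₁ hlbE F
  have hspA : GLP (((worm C).and (dia m (worm D))).imp (worm A)) := by
    rw [hA]; exact split₂ hC D
  have hspB : GLP (((worm E).and (dia m (worm F))).imp (worm B)) := by
    rw [hB]; exact split₂ hE F
  have hAmF : GLP ((worm A).imp (dia m (worm F))) := glp_comp hAD (dia_mono hDF.1)
  have hBmD : GLP ((worm B).imp (dia m (worm D))) := glp_comp hBF (dia_mono hDF.2)
  by_cases hCnil : C = []
  · by_cases hEnil : E = []
    · -- A ≡ B
      refine Or.inr (Or.inr ⟨?_, ?_⟩)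
      · rw [hA, hB, hCnil, hEnil]; exact dia_mono hDF.1
      · rw [hA, hB, hCnil, hEnil]; exact dia_mono hDF.2
    · -- B strictly above A
      obtain ⟨e, E₁, hEval⟩ := List.exists_cons_of_ne_nil hEnil
      refine Or.inr (Or.inl (fun l hlB hlA => ?_))
      have hlm : l ≤ m := hlA m hmA
      have hstep1 : GLP ((worm B).imp (worm (E ++ m :: D))) :=
        glp_comp (glp_pair hBE hBmD) (split₂ hE D)
      have hle : l ≤ e := le_trans hlm (le_of_lt (hE e (by rw [hEval]; exact List.Mem.head _)))
      have hstep2 : GLP ((worm (E ++ m :: D)).imp (dia l (worm A))) := by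
        rw [hEval, hA, hCnil]
        exact glp_comp (dia_lvl hle _)
          (dia_mono (split₁ (fun b hb => hlbE b (by rw [hEval]; exact List.mem_cons_of_mem _ hb)) D))
      exact glp_comp hstep1 hstep2
  · obtain ⟨c, C₁, hCval⟩ := List.exists_cons_of_ne_nil hCnil
    by_cases hEnil : E = []
    · -- A strictly above B
      refine Or.inl (fun l hlA hlB => ?_)
      have hlm : l ≤ m := hlA m hmA
      have hstep1 : GLP ((worm A).imp (worm (C ++ m :: F))) :=
        glp_comp (glp_pair hAC hAmF) (split₂ hC F)
      have hlc : l ≤ c := le_trans hlm (le_of_lt (hC c (by rw [hCval]; exact List.Mem.head _)))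
      have hstep2 : GLP ((worm (C ++ m :: F)).imp (dia l (worm B))) := by
        rw [hCval, hB, hEnil]
        exact glp_comp (dia_lvl hlc _)
          (dia_mono (split₁ (fun b hb => hlbC b (by rw [hCval]; exact List.mem_cons_of_mem _ hb)) F))
      exact glp_comp hstep1 hstep2
    · obtain ⟨ν, hνmem, hνmin⟩ := exists_min (C ++ E)
        (by intro h; exact hCnil (List.append_eq_nil_iff.mp h).1)
      have hmν : m < ν := by
        rcases List.mem_append.mp hνmem with h | h
        · exact hC ν h
        · exact hE ν h
      have hνC : lbW ν C := fun b hb => hνmin b (List.mem_append.mpr (Or.inl hb))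
      have hνE : lbW ν E := fun b hb => hνmin b (List.mem_append.mpr (Or.inr hb))
      rcases ih C E lenCE with hCE | hEC | hEqCE
      · -- A strictly above B
        have h1 : GLP ((worm A).imp (dia ν (worm E))) := glp_comp hAC (hCE ν hνC hνE)
        have h3 : GLP ((worm A).imp (dia ν (worm B))) :=
          glp_comp (glp_L1c hmν h1 hAmF) (dia_mono hspB)
        exact Or.inl (ab_of_at (Or.inl hmA) (glp_comp h3 (dia_lvl (le_of_lt hmν) _)))
      · -- B strictly above A
        have h1 : GLP ((worm B).imp (dia ν (worm C))) := glp_comp hBE (hEC ν hνE hνC)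
        have h3 : GLP ((worm B).imp (dia ν (worm A))) :=
          glp_comp (glp_L1c hmν h1 hBmD) (dia_mono hspA)
        exact Or.inr (Or.inl (ab_of_at (Or.inr hmA) (glp_comp h3 (dia_lvl (le_of_lt hmν) _))))
      · -- A ≡ B
        refine Or.inr (Or.inr ⟨?_, ?_⟩)
        · exact glp_comp (glp_pair (glp_comp hAC hEqCE.1) hAmF) hspB
        · exact glp_comp (glp_pair (glp_comp hBE hEqCE.2) hBmD) hspA

private theorem tri : ∀ (n : ℕ) (A B : List L), A.length + B.length ≤ n → TriS A B := by
  intro n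
  induction n with
  | zero =>
    intro A B hlen
    have hA : A = [] := List.length_eq_zero_iff.mp (by omega)
    have hB : B = [] := List.length_eq_zero_iff.mp (by omega)
    subst hA; subst hB
    exact Or.inr (Or.inr ⟨glp_imp_refl _, glp_imp_refl _⟩)
  | succ n ih =>
    intro A B hlen
    rcases A with _ | ⟨a, A₁⟩
    · rcases B with _ | ⟨b, B₁⟩
      · exact Or.inr (Or.inr ⟨glp_imp_refl _, glp_imp_refl _⟩)
      · exact Or.inr (Or.inl (fun l hlB hlA => dia_top_of_cons (hlB b (List.Mem.head _)) B₁))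
    · rcases B with _ | ⟨b, B₁⟩
      · exact Or.inl (fun l hlA hlB => dia_top_of_cons (hlA a (List.Mem.head _)) A₁)
      · obtain ⟨m, hmmem, hmmin⟩ := exists_min ((a :: A₁) ++ (b :: B₁)) (by simp)
        have hlbA : lbW m (a :: A₁) := fun x hx => hmmin x (List.mem_append.mpr (Or.inl hx))
        have hlbB : lbW m (b :: B₁) := fun x hx => hmmin x (List.mem_append.mpr (Or.inr hx))
        by_cases hmB : m ∈ (b :: B₁)
        · obtain ⟨E, F, hB, hE⟩ := decomp_first hmB hlbB
          have hBLen : B₁.length + 1 = E.length + (F.length + 1) := by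
            have := congrArg List.length hB
            simpa [List.length_append] using this
          by_cases hmA : m ∈ (a :: A₁)
          · obtain ⟨C, D, hA, hC⟩ := decomp_first hmA hlbA
            have hALen : A₁.length + 1 = C.length + (D.length + 1) := by
              have := congrArg List.length hA
              simpa [List.length_append] using this
            have lenDF : D.length + F.length ≤ n := by
              simp only [List.length_cons] at hlen; omega
            have hlen' : (a :: A₁).length + (b :: B₁).length ≤ n + 1 := hlen
            rcases ih D F lenDF with hDF | hFD | hEqDF
            · exact (tri_both_aux ih hB hA hE hC hlbB hlbA hDF (by omega)).symm
            · exact tri_both_aux ih hA hB hC hE hlbA hlbB hFD hlen'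
            · exact tri_both_eq ih hA hB hC hE hlbA hlbB hEqDF hlen'
          · have hAs : lbsW m (a :: A₁) := fun x hx =>
              lt_of_le_of_ne (hlbA x hx) (by rintro rfl; exact hmA hx)
            exact (tri_caseA ih hB hE (by simp) hAs hlbB (by omega)).symm
        · have hmA : m ∈ (a :: A₁) := by
            rcases List.mem_append.mp hmmem with h | h
            · exact h
            · exact absurd h hmB
          obtain ⟨C, D, hA, hC⟩ := decomp_first hmA hlbA
          have hBs : lbsW m (b :: B₁) := fun x hx =>
            lt_of_le_of_ne (hlbB x hx) (by rintro rfl; exact hmB hx)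
          exact tri_caseA ih hA hC (by simp) hBs hlbA hlen

/-! ### The key dichotomy: if `⊬ A → B` then `⊢ A ∧ B → ⟨l⟩A` -/

private theorem xlem : ∀ (n : ℕ) (A B : List L) (l : L), A.length + B.length ≤ n →
    lbW l A → lbW l B → ¬ GLP ((worm A).imp (worm B)) →
    GLP (((worm A).and (worm B)).imp (dia l (worm A))) := by
  intro n
  induction n with
  | zero =>
    intro A B l hlen _ _ hnot
    have hB : B = [] := List.length_eq_zero_iff.mp (by omega)
    subst hB
    exact absurd (glp_imp_top _) hnot
  | succ n ih =>
    intro A B l hlen hlA hlB hnot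
    rcases B with _ | ⟨b, B₁⟩
    · exact absurd (glp_imp_top _) hnot
    rcases A with _ | ⟨a, A₁⟩
    · exact glp_comp (glp_and_right _ _) (dia_top_of_cons (hlB b (List.Mem.head _)) B₁)
    have hlen' : A₁.length + 1 + (B₁.length + 1) ≤ n + 1 := by simpa using hlen
    obtain ⟨m, hmmem, hmmin⟩ := exists_min ((a :: A₁) ++ (b :: B₁)) (by simp)
    have hlbA : lbW m (a :: A₁) := fun x hx => hmmin x (List.mem_append.mpr (Or.inl hx))
    have hlbB : lbW m (b :: B₁) := fun x hx => hmmin x (List.mem_append.mpr (Or.inr hx))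
    have hlm : l ≤ m := by
      rcases List.mem_append.mp hmmem with h | h
      · exact hlA m h
      · exact hlB m h
    suffices h : GLP (((worm (a :: A₁)).and (worm (b :: B₁))).imp (dia m (worm (a :: A₁)))) by
      exact glp_comp h (dia_lvl hlm _)
    by_cases hmB : m ∈ (b :: B₁)
    · obtain ⟨E, F, hB, hE⟩ := decomp_first hmB hlbB
      have hBLen : B₁.length + 1 = E.length + (F.length + 1) := by
        have := congrArg List.length hB
        simpa [List.length_append] using this
      have hlbE : lbW m E := fun x hx => le_of_lt (hE x hx)
      have hlbF : lbW m F := fun x hx => hlbB x (by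
        rw [hB]; exact List.mem_append.mpr (Or.inr (List.mem_cons_of_mem _ hx)))
      have hBE : GLP ((worm (b :: B₁)).imp (worm E)) := by
        rw [hB]; exact worm_append_imp E (m :: F)
      have hBF : GLP ((worm (b :: B₁)).imp (dia m (worm F))) := by
        rw [hB]; exact split₁ hlbE F
      rcases tri ((a :: A₁).length + F.length) (a :: A₁) F (le_refl _) with hAF | hFA | hEq
      · by_cases hAE : GLP ((worm (a :: A₁)).imp (worm E))
        · refine absurd (show GLP ((worm (a :: A₁)).imp (worm (b :: B₁))) from ?_) hnot
          rw [hB]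
          exact glp_comp (glp_pair hAE (hAF m hlbA hlbF)) (split₂ hE F)
        · have hlenAE : (a :: A₁).length + E.length ≤ n := by
            simp only [List.length_cons]; omega
          have hx := ih (a :: A₁) E m hlenAE hlbA hlbE hAE
          exact glp_comp (glp_pair (glp_and_left _ _)
            (glp_comp (glp_and_right _ _) hBE)) hx
      · exact glp_comp (glp_and_right _ _) (glp_comp hBF
          (glp_comp (dia_mono (hFA m hlbF hlbA)) (dia_absorb (le_refl m) _)))
      · exact glp_comp (glp_and_right _ _) (glp_comp hBF (dia_mono hEq.2))
    · have hmA : m ∈ (a :: A₁) := by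
        rcases List.mem_append.mp hmmem with h | h
        · exact h
        · exact absurd h hmB
      have hBs : lbsW m (b :: B₁) := fun x hx =>
        lt_of_le_of_ne (hlbB x hx) (by rintro rfl; exact hmB hx)
      obtain ⟨C, D, hA, hC⟩ := decomp_first hmA hlbA
      have hALen : A₁.length + 1 = C.length + (D.length + 1) := by
        have := congrArg List.length hA
        simpa [List.length_append] using this
      have hlbC : lbW m C := fun x hx => le_of_lt (hC x hx)
      by_cases hCB : GLP ((worm C).imp (worm (b :: B₁)))
      · refine absurd (show GLP ((worm (a :: A₁)).imp (worm (b :: B₁))) from ?_) hnot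
        rw [hA]
        exact glp_comp (worm_append_imp C (m :: D)) hCB
      · obtain ⟨ν, hνmem, hνmin⟩ := exists_min (C ++ (b :: B₁)) (by simp)
        have hmν : m < ν := by
          rcases List.mem_append.mp hνmem with h | h
          · exact hC ν h
          · exact hBs ν h
        have hνC : lbW ν C := fun x hx => hνmin x (List.mem_append.mpr (Or.inl hx))
        have hνB : lbW ν (b :: B₁) := fun x hx => hνmin x (List.mem_append.mpr (Or.inr hx))
        have hlenCB : C.length + (b :: B₁).length ≤ n := by
          simp only [List.length_cons]; omega
        have hx := ih C (b :: B₁) ν hlenCB hνC hνB hCB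
        have h1 : GLP (((worm (a :: A₁)).and (worm (b :: B₁))).imp (dia ν (worm C))) :=
          glp_comp (glp_pair (glp_comp (glp_and_left _ _)
            (show GLP ((worm (a :: A₁)).imp (worm C)) from by
              rw [hA]; exact worm_append_imp C (m :: D)))
            (glp_and_right _ _)) hx
        have h2 : GLP (((worm (a :: A₁)).and (worm (b :: B₁))).imp (dia m (worm D))) :=
          glp_comp (glp_and_left _ _)
            (show GLP ((worm (a :: A₁)).imp (dia m (worm D))) from by
              rw [hA]; exact split₁ hlbC D)
        have hsp : GLP (((worm C).and (dia m (worm D))).imp (worm (a :: A₁))) := by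
          rw [hA]; exact split₂ hC D
        exact glp_comp (glp_comp (glp_L1c hmν h1 h2) (dia_mono hsp))
          (dia_lvl (le_of_lt hmν) _)

/-! ### Conjunction of negated worms -/

private theorem cnw_elim {Ai : List L} : ∀ {As : List (List L)}, Ai ∈ As →
    GLP ((conjNegWorms As).imp (worm Ai).neg) := by
  intro As
  induction As with
  | nil => intro h; simp at h
  | cons a as ihh =>
    intro h
    rcases List.mem_cons.mp h with rfl | h
    · exact glp_and_left _ _
    · exact glp_comp (glp_and_right _ _) (ihh h)

private theorem cnw_intro {X : Formula L} : ∀ {As : List (List L)},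
    (∀ Ai ∈ As, GLP (X.imp (worm Ai).neg)) → GLP (X.imp (conjNegWorms As)) := by
  intro As
  induction As with
  | nil => intro _; exact glp_imp_top X
  | cons a as ihh =>
    intro h
    exact glp_pair (h a (List.Mem.head _))
      (ihh (fun Ai hAi => h Ai (List.mem_cons_of_mem _ hAi)))



end WormDevelopment

/-- Assuming irreflexivity of `<_α`, for worms `A, A₁, …, A_k ∈ 𝕎_α`,
either `GLP ⊢ ⟨α⟩(A ∧ ⋀ᵢ ¬A_i) ↔ ⟨α⟩A` or `GLP ⊢ (A ∧ ⋀ᵢ ¬A_i) ↔ ⊥`. -/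
theorem worms_closed_under_diamonds {L : Type} [LinearOrder L] (α : L)
    (irrefl : ∀ (D : List L) (γ : L), ¬ GLP ((worm D).imp (Formula.dia γ (worm D))))
    (A : List L) (As : List (List L))
    (hAm : ∀ β ∈ A, α ≤ β) (hAsm : ∀ Ai ∈ As, ∀ β ∈ Ai, α ≤ β) :
    GLP ((Formula.dia α ((worm A).and (conjNegWorms As))).iff
        (Formula.dia α (worm A))) ∨
      GLP (((worm A).and (conjNegWorms As)).iff Formula.bot) := by
  classical
  by_cases hex : ∃ Ai ∈ As, GLP ((worm A).imp (worm Ai))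
  · obtain ⟨Ai, hmem, hAAi⟩ := hex
    right
    have h1 : GLP (((worm A).and (conjNegWorms As)).imp Formula.bot) := by
      have d : Der [(worm A).and (conjNegWorms As)] Formula.bot := by
        have ha : Der [(worm A).and (conjNegWorms As)] (worm A) :=
          .mp (.thm (glp_and_left _ _)) (.ax (List.Mem.head _))
        have hn : Der [(worm A).and (conjNegWorms As)] (conjNegWorms As) :=
          .mp (.thm (glp_and_right _ _)) (.ax (List.Mem.head _))
        exact .mp (.mp (.thm (cnw_elim hmem)) hn) (.mp (.thm hAAi) ha)
      exact glp_of_der d.deduction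
    exact glp_of_der (Der.and_intro (.thm h1) (.thm (glp_explosion _)))
  · left
    push_neg at hex
    have hstep : ∀ Ai ∈ As, GLP (((worm A).and (worm Ai)).imp (dia α (worm A))) :=
      fun Ai hAi => xlem (A.length + Ai.length) A Ai α (le_refl _) hAm (hAsm Ai hAi)
        (hex Ai hAi)
    have hXN : GLP (((worm A).and (Formula.box α (worm A).neg)).imp (conjNegWorms As)) := by
      refine cnw_intro (fun Ai hAi => ?_)
      have d : Der [worm Ai, (worm A).and (Formula.box α (worm A).neg)] Formula.bot := by
        have ha : Der [worm Ai, (worm A).and (Formula.box α (worm A).neg)] (worm A) :=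
          .mp (.thm (glp_and_left _ _)) (.ax (List.Mem.tail _ (List.Mem.head _)))
        have hb : Der [worm Ai, (worm A).and (Formula.box α (worm A).neg)]
            (Formula.box α (worm A).neg) :=
          .mp (.thm (glp_and_right _ _)) (.ax (List.Mem.tail _ (List.Mem.head _)))
        have hdia : Der [worm Ai, (worm A).and (Formula.box α (worm A).neg)]
            (dia α (worm A)) :=
          .mp (.thm (hstep Ai hAi)) (Der.and_intro ha (.ax (List.Mem.head _)))
        exact .mp hdia hb
      exact glp_of_der d.deduction.deduction
    have fwd : GLP ((dia α (worm A)).imp (dia α ((worm A).and (conjNegWorms As)))) :=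
      glp_comp (lob_dia α (worm A)) (dia_mono (glp_pair (glp_and_left _ _) hXN))
    have bwd : GLP ((dia α ((worm A).and (conjNegWorms As))).imp (dia α (worm A))) :=
      dia_mono (glp_and_left _ _)
    exact glp_of_der (Der.and_intro (.thm bwd) (.thm fwd))
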